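/- Let λ = 0 be the zero weight for p(n), with weight diagram having black balls at positions 0, 1, ..., n-1. Then a weight diagram μ (with associated function f_μ) lies in ▲(0) if and only if f_μ(0) = 1 and f_μ(i) + f_μ(-i) = 1 for all i = 1, 2, ..., n-1 (and f_μ(j) = 0 for |j| ≥ n). In particular |▲(0)| = 2^(n-1). -/

import Mathlib

/-- The ±1 marker of a weight diagram `f : ℤ → {0,1}`: `g(i) = (-1)^(f(i)+1)`,
i.e. `1` on black balls and `-1` on empty positions. -/
def bg (f : ℤ → ℤ) (i : ℤ) : ℤ := if f i = 1 then 1 else -1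

/-- `r⁺(i,j) = Σ_{s=j}^{i-1} g(s)`. -/
noncomputable def rpl (f : ℤ → ℤ) (i j : ℤ) : ℤ := ∑ s ∈ Finset.Icc j (i - 1), bg f s

/-- `r⁻(i,j) = -Σ_{s=j+1}^{i} g(s)`. -/
noncomputable def rmi (f : ℤ → ℤ) (i j : ℤ) : ℤ := -∑ s ∈ Finset.Icc (j + 1) i, bg f s

/-- The set `⟵i▲(f)` of targets of solid arrows starting at position `i`:
`{j < i : r⁺(i,j) = 0 and r⁺(i,s) ≥ 0 for all j < s < i}`. -/
def solidT (f : ℤ → ℤ) (i : ℤ) : Set ℤ :=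
  {j | j < i ∧ rpl f i j = 0 ∧ ∀ s, j < s → s < i → 0 ≤ rpl f i s}

/-- The set `j⇢▼(f)` of targets of dashed arrows starting at position `j`:
`{i > j : r⁻(i,j) = 0 and r⁻(s,j) ≥ 0 for all j < s < i}`. -/
def dashT (f : ℤ → ℤ) (j : ℤ) : Set ℤ :=
  {i | j < i ∧ rmi f i j = 0 ∧ ∀ s, j < s → s < i → 0 ≤ rmi f s j}

/-- `f : ℤ → ℤ` is a weight diagram with `n` black balls: it takes values in `{0,1}`
and has exactly `n` positions with value `1`. -/
def IsWD (f : ℤ → ℤ) (n : ℕ) : Prop :=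
  (∀ i, f i = 0 ∨ f i = 1) ∧ {i | f i = 1}.Finite ∧ {i | f i = 1}.ncard = n

/-- `μ ∈ ▲(fl)`: `μ` is a weight diagram with `n` balls such that for every black ball
`i` of `fl`, exactly one position among `{i} ∪ ⟵i▲(fl)` carries a black ball of `μ`. -/
def inUp (fl : ℤ → ℤ) (n : ℕ) (μ : ℤ → ℤ) : Prop :=
  IsWD μ n ∧ ∀ i, fl i = 1 → ∃! p, (p = i ∨ p ∈ solidT fl i) ∧ μ p = 1

/-- The weight diagram of the zero weight of `p(n)`: black balls at `0, 1, ..., n-1`. -/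
def zeroWD (n : ℕ) : ℤ → ℤ := fun i => if 0 ≤ i ∧ i < n then 1 else 0

lemma bg_zeroWD (n : ℕ) (s : ℤ) :
    bg (zeroWD n) s = if 0 ≤ s ∧ s < n then 1 else -1 := by
  unfold bg zeroWD
  split <;> simp_all

lemma rpl_zeroWD (n : ℕ) (i j : ℤ) (hin : i ≤ n) :
    rpl (zeroWD n) i j =
      ((i - max j 0).toNat : ℤ) - ((min (i - 1) (-1) + 1 - j).toNat : ℤ) := by
  unfold rpl
  rw [Finset.sum_congr rfl (fun s _ => bg_zeroWD n s), Finset.sum_ite]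
  have h1 : (Finset.Icc j (i - 1)).filter (fun s => 0 ≤ s ∧ s < (n : ℤ)) =
      Finset.Icc (max j 0) (i - 1) := by
    ext s
    simp only [Finset.mem_filter, Finset.mem_Icc]
    omega
  have h2 : (Finset.Icc j (i - 1)).filter (fun s => ¬(0 ≤ s ∧ s < (n : ℤ))) =
      Finset.Icc j (min (i - 1) (-1)) := by
    ext s
    simp only [Finset.mem_filter, Finset.mem_Icc]
    omega
  rw [h1, h2, Finset.sum_const, Finset.sum_const, Int.card_Icc, Int.card_Icc]
  simp only [nsmul_eq_mul, mul_one, mul_neg]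
  omega

lemma solidT_zeroWD_zero (n : ℕ) : solidT (zeroWD n) 0 = ∅ := by
  ext j
  simp only [solidT, Set.mem_setOf_eq, Set.mem_empty_iff_false, iff_false, not_and]
  intro hj h0
  rw [rpl_zeroWD n 0 j (by omega)] at h0
  omega

lemma solidT_zeroWD_pos (n : ℕ) (i : ℤ) (h1 : 1 ≤ i) (h2 : i < n) :
    solidT (zeroWD n) i = {-i} := by
  ext j
  simp only [solidT, Set.mem_setOf_eq, Set.mem_singleton_iff]
  constructor
  · rintro ⟨hj, h0, -⟩
    rw [rpl_zeroWD n i j (by omega)] at h0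
    omega
  · rintro rfl
    refine ⟨by omega, by rw [rpl_zeroWD n i _ (by omega)]; omega, fun s hs1 hs2 => ?_⟩
    rw [rpl_zeroWD n i s (by omega)]
    omega

lemma key18 (n : ℕ) (hn : 1 ≤ n) (μ : ℤ → ℤ) :
    inUp (zeroWD n) n μ ↔
      ((∀ i, μ i = 0 ∨ μ i = 1) ∧ μ 0 = 1 ∧
        (∀ i : ℤ, 1 ≤ i → i ≤ (n : ℤ) - 1 → μ i + μ (-i) = 1) ∧
        (∀ j : ℤ, (n : ℤ) ≤ |j| → μ j = 0)) := by
  classical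
  have hz : ∀ i : ℤ, 0 ≤ i → i < n → zeroWD n i = 1 := by
    intro i hi1 hi2
    simp [zeroWD, hi1, hi2]
  set φ : ℤ → ℤ := fun i => if μ i = 1 then i else -i with hφdef
  have hφinj : Set.InjOn φ (Finset.Icc (0:ℤ) ((n:ℤ)-1)) := by
    intro a ha b hb hab
    simp only [Finset.coe_Icc, Set.mem_Icc] at ha hb
    simp only [hφdef] at hab
    split_ifs at hab <;> omega
  have hcardIcc : (Finset.Icc (0:ℤ) ((n:ℤ)-1)).card = n := by
    rw [Int.card_Icc]; omega
  constructor
  · rintro ⟨⟨hval, hfin, hcard⟩, H⟩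
    have h0 : μ 0 = 1 := by
      obtain ⟨p, ⟨hp1, hp2⟩, -⟩ := H 0 (hz 0 le_rfl (by exact_mod_cast hn))
      rcases hp1 with rfl | hmem
      · exact hp2
      · rw [solidT_zeroWD_zero] at hmem
        exact absurd hmem (Set.notMem_empty _)
    have hsum : ∀ i : ℤ, 1 ≤ i → i ≤ (n:ℤ)-1 → μ i + μ (-i) = 1 := by
      intro i hi1 hi2
      obtain ⟨p, ⟨hp1, hp2⟩, hu⟩ := H i (hz i (by omega) (by omega))
      simp only [solidT_zeroWD_pos n i hi1 (by omega), Set.mem_singleton_iff] at hp1 hu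
      rcases hp1 with h | h
      · have h2 : μ (-i) = 0 := by
          rcases hval (-i) with h' | h'
          · exact h'
          · have := hu (-i) ⟨Or.inr rfl, h'⟩
            omega
        rw [h] at hp2
        omega
      · have h2 : μ i = 0 := by
          rcases hval i with h' | h'
          · exact h'
          · have := hu i ⟨Or.inl rfl, h'⟩
            omega
        rw [h] at hp2
        omega
    have hφmem : ∀ i ∈ Finset.Icc (0:ℤ) ((n:ℤ)-1), μ (φ i) = 1 := by
      intro i hi
      rw [Finset.mem_Icc] at hi
      by_cases h : μ i = 1
      · simp [hφdef, h]
      · simp only [hφdef, if_neg h]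
        rcases eq_or_lt_of_le hi.1 with rfl | hi1
        · exact absurd h0 h
        · have := hsum i (by omega) hi.2
          rcases hval i with h' | h'
          · rcases hval (-i) with h'' | h'' <;> omega
          · exact absurd h' h
    have hBsub : ↑((Finset.Icc (0:ℤ) ((n:ℤ)-1)).image φ) ⊆ {i | μ i = 1} := by
      intro j hj
      simp only [Finset.coe_image, Set.mem_image, Finset.mem_coe] at hj
      obtain ⟨i, hi, rfl⟩ := hj
      exact hφmem i hi
    have hBcard : ((Finset.Icc (0:ℤ) ((n:ℤ)-1)).image φ).card = n := by
      rw [Finset.card_image_of_injOn hφinj, hcardIcc]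
    have hEq : ↑((Finset.Icc (0:ℤ) ((n:ℤ)-1)).image φ) = {i | μ i = 1} :=
      Set.eq_of_subset_of_ncard_le hBsub (by rw [Set.ncard_coe_finset, hBcard, hcard]) hfin
    refine ⟨hval, h0, hsum, ?_⟩
    intro j hj
    rcases hval j with h | h
    · exact h
    · exfalso
      have : j ∈ ({i | μ i = 1} : Set ℤ) := h
      rw [← hEq] at this
      simp only [Finset.coe_image, Set.mem_image, Finset.mem_coe, Finset.mem_Icc] at this
      obtain ⟨i, hi, hij⟩ := this
      simp only [hφdef] at hij
      have hja : |j| ≤ (n:ℤ) - 1 := by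
        split_ifs at hij <;> rw [abs_le] <;> omega
      omega
  · rintro ⟨hval, h0, hsum, hvan⟩
    have habs : ∀ j : ℤ, μ j = 1 → |j| < (n:ℤ) := by
      intro j hj
      by_contra hc
      have := hvan j (by omega)
      omega
    have hφmem : ∀ i ∈ Finset.Icc (0:ℤ) ((n:ℤ)-1), μ (φ i) = 1 := by
      intro i hi
      rw [Finset.mem_Icc] at hi
      by_cases h : μ i = 1
      · simp [hφdef, h]
      · simp only [hφdef, if_neg h]
        rcases eq_or_lt_of_le hi.1 with rfl | hi1
        · exact absurd h0 h
        · have := hsum i (by omega) hi.2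
          rcases hval i with h' | h'
          · rcases hval (-i) with h'' | h'' <;> omega
          · exact absurd h' h
    have hEq : {i | μ i = 1} = ↑((Finset.Icc (0:ℤ) ((n:ℤ)-1)).image φ) := by
      ext j
      simp only [Set.mem_setOf_eq, Finset.coe_image, Set.mem_image, Finset.mem_coe,
        Finset.mem_Icc]
      constructor
      · intro hj
        have habsj := habs j hj
        rcases le_or_gt 0 j with hj0 | hj0
        · exact ⟨j, ⟨hj0, by rw [abs_of_nonneg hj0] at habsj; omega⟩, by simp [hφdef, hj]⟩
        · refine ⟨-j, ⟨by omega, by rw [abs_of_neg hj0] at habsj; omega⟩, ?_⟩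
          have := hsum (-j) (by omega) (by rw [abs_of_neg hj0] at habsj; omega)
          rw [neg_neg] at this
          have hmj : μ (-j) = 0 := by
            rcases hval (-j) with h | h
            · exact h
            · omega
          simp [hφdef, hmj, neg_neg]
      · rintro ⟨i, hi, rfl⟩
        exact hφmem i (Finset.mem_Icc.mpr hi)
    refine ⟨⟨hval, by rw [hEq]; exact Finset.finite_toSet _, by
      rw [hEq, Set.ncard_coe_finset, Finset.card_image_of_injOn hφinj, hcardIcc]⟩, ?_⟩
    intro i hi
    have hii : 0 ≤ i ∧ i < (n:ℤ) := by
      by_contra hc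
      unfold zeroWD at hi
      rw [if_neg hc] at hi
      exact absurd hi (by norm_num)
    rcases eq_or_lt_of_le hii.1 with rfl | hi1
    · refine ⟨0, ⟨Or.inl rfl, h0⟩, ?_⟩
      rintro y ⟨hy | hy, -⟩
      · exact hy
      · rw [solidT_zeroWD_zero] at hy
        exact absurd hy (Set.notMem_empty _)
    · have hsi := hsum i hi1 (by omega)
      by_cases h : μ i = 1
      · refine ⟨i, ⟨Or.inl rfl, h⟩, ?_⟩
        rintro y ⟨hy | hy, hμy⟩
        · exact hy
        · rw [solidT_zeroWD_pos n i hi1 hii.2, Set.mem_singleton_iff] at hy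
          subst hy
          omega
      · have hmi : μ i = 0 := (hval i).resolve_right h
        have hni : μ (-i) = 1 := by
          rcases hval (-i) with h' | h' <;> omega
        refine ⟨-i, ⟨Or.inr (by rw [solidT_zeroWD_pos n i hi1 hii.2]; rfl), hni⟩, ?_⟩
        rintro y ⟨hy | hy, hμy⟩
        · subst hy; omega
        · rwa [solidT_zeroWD_pos n i hi1 hii.2, Set.mem_singleton_iff] at hy

/-- a weight diagram `μ` lies in `▲(0)` if and only if `f_μ(0) = 1`,
`f_μ(i) + f_μ(-i) = 1` for `i = 1,...,n-1`, and `f_μ(j) = 0` for `|j| ≥ n`.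
In particular `|▲(0)| = 2^(n-1)`. -/
theorem stmt18 (n : ℕ) (hn : 1 ≤ n) :
    (∀ μ : ℤ → ℤ,
      inUp (zeroWD n) n μ ↔
        ((∀ i, μ i = 0 ∨ μ i = 1) ∧ μ 0 = 1 ∧
          (∀ i : ℤ, 1 ≤ i → i ≤ (n : ℤ) - 1 → μ i + μ (-i) = 1) ∧
          (∀ j : ℤ, (n : ℤ) ≤ |j| → μ j = 0))) ∧
    Nat.card {μ : ℤ → ℤ // inUp (zeroWD n) n μ} = 2 ^ (n - 1) := by
  classical
  refine ⟨fun μ => key18 n hn μ, ?_⟩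
  have e : {μ : ℤ → ℤ // inUp (zeroWD n) n μ} ≃
      ((Finset.Icc (1:ℤ) ((n:ℤ)-1)) → Bool) :=
  { toFun := fun μ i => decide (μ.1 (i : ℤ) = 1)
    invFun := fun b => ⟨fun j =>
      if j = 0 then 1
      else if h : j ∈ Finset.Icc (1:ℤ) ((n:ℤ)-1) then (if b ⟨j, h⟩ then 1 else 0)
      else if h : -j ∈ Finset.Icc (1:ℤ) ((n:ℤ)-1) then (if b ⟨-j, h⟩ then 0 else 1)
      else 0, by
      rw [key18 n hn]
      refine ⟨?_, by simp, ?_, ?_⟩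
      · intro j
        split_ifs <;> simp
      · intro i hi1 hi2
        have hmem : i ∈ Finset.Icc (1:ℤ) ((n:ℤ)-1) := Finset.mem_Icc.mpr ⟨hi1, hi2⟩
        have hnmem : ¬(-i ∈ Finset.Icc (1:ℤ) ((n:ℤ)-1)) := by
          simp only [Finset.mem_Icc]; omega
        rw [if_neg (show ¬(i = 0) by omega), dif_pos hmem,
          if_neg (show ¬(-i = 0) by omega), dif_neg hnmem]
        simp only [neg_neg]
        rw [dif_pos hmem]
        split_ifs <;> norm_num
      · intro j hj
        have habs := le_abs.mp hj
        have h1 : ¬(j = 0) := by omega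
        have h2 : ¬(j ∈ Finset.Icc (1:ℤ) ((n:ℤ)-1)) := by
          simp only [Finset.mem_Icc]; omega
        have h3 : ¬(-j ∈ Finset.Icc (1:ℤ) ((n:ℤ)-1)) := by
          simp only [Finset.mem_Icc]; omega
        rw [if_neg h1, dif_neg h2, dif_neg h3]⟩
    left_inv := fun μp => by
      obtain ⟨μ, hμ⟩ := μp
      obtain ⟨hval, h0, hsum, hvan⟩ := (key18 n hn μ).mp hμ
      apply Subtype.ext
      funext j
      dsimp only
      by_cases hj0 : j = 0
      · subst hj0
        simp [h0]
      rw [if_neg hj0]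
      by_cases h1 : j ∈ Finset.Icc (1:ℤ) ((n:ℤ)-1)
      · rw [dif_pos h1]
        rcases hval j with h | h <;> simp [h]
      · rw [dif_neg h1]
        by_cases h2 : -j ∈ Finset.Icc (1:ℤ) ((n:ℤ)-1)
        · rw [dif_pos h2]
          have hs := hsum (-j) (Finset.mem_Icc.mp h2).1 (Finset.mem_Icc.mp h2).2
          rw [neg_neg] at hs
          rcases hval (-j) with h | h <;> simp [h] <;> omega
        · rw [dif_neg h2]
          have hv : μ j = 0 := by
            apply hvan j
            apply le_abs.mpr
            simp only [Finset.mem_Icc] at h1 h2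
            omega
          exact hv.symm
    right_inv := fun b => by
      funext i
      obtain ⟨i, hi⟩ := i
      have h1 := Finset.mem_Icc.mp hi
      dsimp only
      simp only [if_neg (show ¬(i = 0) by omega), dif_pos hi]
      cases hb : b ⟨i, hi⟩ <;> simp [hb] }
  rw [Nat.card_congr e, Nat.card_fun, Nat.card_eq_fintype_card, Fintype.card_bool,
    Nat.card_eq_finsetCard, Int.card_Icc]
  congr 1
  omega
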